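/- Let G be a simple graph on n vertices. Then there exists a vertex assignment c : V(G) → {1, ..., 12n²} such that for every simple graph G' on n vertices and every vertex assignment c' : V(G') → ℤ⁺, if S(G,c) = S(G',c') then G is isomorphic to G'. -/

import Mathlib

lemma sidon {p : ℕ} (hp : p.Prime) (hp2 : 2 < p) {x y z w : ℕ}
    (hx : x < p) (hy : y < p) (hz : z < p) (hw : w < p)
    (h : (2*p*x + x^2 % p) + (2*p*y + y^2 % p) = (2*p*z + z^2 % p) + (2*p*w + w^2 % p)) :
    (x = z ∧ y = w) ∨ (x = w ∧ y = z) := by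
  haveI : Fact p.Prime := ⟨hp⟩
  have hp0 : 0 < p := hp.pos
  have rx : x^2 % p < p := Nat.mod_lt _ hp0
  have ry : y^2 % p < p := Nat.mod_lt _ hp0
  have rz : z^2 % p < p := Nat.mod_lt _ hp0
  have rw' : w^2 % p < p := Nat.mod_lt _ hp0
  have h' : 2*p*(x+y) + (x^2 % p + y^2 % p) = 2*p*(z+w) + (z^2 % p + w^2 % p) := by ring_nf; ring_nf at h; omega
  have hdiv : ∀ A s : ℕ, s < 2*p → (2*p*A + s) / (2*p) = A := by
    intro A s hs
    rw [Nat.mul_add_div (by omega)]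
    simp [Nat.div_eq_of_lt hs]
  have hmod : ∀ A s : ℕ, s < 2*p → (2*p*A + s) % (2*p) = s := by
    intro A s hs
    rw [Nat.mul_add_mod]
    exact Nat.mod_eq_of_lt hs
  have hsum : x + y = z + w := by
    have h1 := hdiv (x+y) (x^2 % p + y^2 % p) (by omega)
    have h2 := hdiv (z+w) (z^2 % p + w^2 % p) (by omega)
    rw [h', h2] at h1
    exact h1.symm
  have hres : x^2 % p + y^2 % p = z^2 % p + w^2 % p := by
    have h1 := hmod (x+y) (x^2 % p + y^2 % p) (by omega)
    have h2 := hmod (z+w) (z^2 % p + w^2 % p) (by omega)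
    rw [h', h2] at h1
    exact h1.symm
  have e1 : (x:ZMod p) + y = z + w := by exact_mod_cast congrArg (Nat.cast : ℕ → ZMod p) hsum
  have e2 : (x:ZMod p)^2 + y^2 = z^2 + w^2 := by
    have := congrArg (Nat.cast : ℕ → ZMod p) hres
    push_cast [ZMod.natCast_mod] at this
    exact this
  have h2 : (2 : ZMod p) ≠ 0 := by
    intro hc
    have : ((2:ℕ) : ZMod p) = 0 := by exact_mod_cast hc
    have hdvd := (ZMod.natCast_eq_zero_iff 2 p).mp this
    have := Nat.le_of_dvd (by norm_num) hdvd
    omega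
  have e3 : (x:ZMod p)*y = z*w := by
    have h4 : 2*((x:ZMod p)*y) = 2*((z:ZMod p)*w) := by
      linear_combination (↑x+↑y+↑z+↑w)*e1 - e2
    exact mul_left_cancel₀ h2 h4
  have e4 : ((x:ZMod p) - z) * ((x:ZMod p) - w) = 0 := by
    linear_combination (x:ZMod p) * e1 - e3
  have natback : ∀ a b : ℕ, a < p → b < p → (a : ZMod p) = b → a = b := by
    intro a b ha hb hab
    have := congrArg ZMod.val hab
    rwa [ZMod.val_cast_of_lt ha, ZMod.val_cast_of_lt hb] at this
  rcases mul_eq_zero.mp e4 with h5 | h5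
  · left
    have hxz : (x:ZMod p) = z := by linear_combination h5
    have hyw : (y:ZMod p) = w := by linear_combination e1 - hxz
    exact ⟨natback _ _ hx hz hxz, natback _ _ hy hw hyw⟩
  · right
    have hxw : (x:ZMod p) = w := by linear_combination h5
    have hyz : (y:ZMod p) = z := by linear_combination e1 - hxw
    exact ⟨natback _ _ hx hw hxw, natback _ _ hy hz hyz⟩

lemma induce_singleton_connected {V : Type*} (G : SimpleGraph V) (v : V) :
    (G.induce (↑({v} : Finset V) : Set V)).Connected := by
  rw [SimpleGraph.connected_iff]
  refine ⟨?_, ⟨⟨v, by simp⟩⟩⟩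
  rintro ⟨a, ha⟩ ⟨b, hb⟩
  simp only [Finset.coe_singleton, Set.mem_singleton_iff] at ha hb
  subst ha; subst hb
  exact SimpleGraph.Reachable.refl _

lemma induce_pair_connected {V : Type*} [DecidableEq V] (G : SimpleGraph V) {u v : V}
    (h : G.Adj u v) :
    (G.induce (↑({u, v} : Finset V) : Set V)).Connected := by
  rw [SimpleGraph.connected_iff]
  have hu : u ∈ (↑({u, v} : Finset V) : Set V) := by simp
  have hv : v ∈ (↑({u, v} : Finset V) : Set V) := by simp
  refine ⟨?_, ⟨⟨u, hu⟩⟩⟩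
  have key : ∀ a : (↑({u, v} : Finset V) : Set V),
      (G.induce (↑({u, v} : Finset V) : Set V)).Reachable ⟨u, hu⟩ a := by
    rintro ⟨a, ha⟩
    simp only [Finset.coe_insert, Set.mem_insert_iff, Finset.coe_singleton,
      Set.mem_singleton_iff] at ha
    rcases ha with rfl | rfl
    · exact SimpleGraph.Reachable.refl _
    · exact SimpleGraph.Adj.reachable (by simpa using h)
  intro a b
  exact (key a).symm.trans (key b)

lemma adj_of_induce_pair_connected {V : Type*} [DecidableEq V] (G : SimpleGraph V) {u v : V}
    (huv : u ≠ v)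
    (h : (G.induce (↑({u, v} : Finset V) : Set V)).Connected) : G.Adj u v := by
  by_contra hadj
  have hbot : G.induce (↑({u, v} : Finset V) : Set V) = ⊥ := by
    ext a b
    simp only [SimpleGraph.bot_adj, iff_false]
    intro hab
    obtain ⟨a, ha⟩ := a
    obtain ⟨b, hb⟩ := b
    simp only [Finset.coe_insert, Set.mem_insert_iff, Finset.coe_singleton,
      Set.mem_singleton_iff] at ha hb
    have hab' : G.Adj a b := by simpa using hab
    rcases ha with rfl | rfl <;> rcases hb with rfl | rfl
    · exact G.loopless.irrefl _ hab'
    · exact hadj hab'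
    · exact hadj hab'.symm
    · exact G.loopless.irrefl _ hab'
  have hu : u ∈ (↑({u, v} : Finset V) : Set V) := by simp
  have hv : v ∈ (↑({u, v} : Finset V) : Set V) := by simp
  have := h.preconnected ⟨u, hu⟩ ⟨v, hv⟩
  rw [hbot, SimpleGraph.reachable_bot] at this
  exact huv (congrArg Subtype.val this)

/-- The set of connected subgraph sums of `G` with vertex assignment `c`. -/
def connSums {V : Type*} [Fintype V] (G : SimpleGraph V) (c : V → ℕ) : Set ℕ :=
  {N | ∃ s : Finset V, s.Nonempty ∧ (G.induce (↑s : Set V)).Connected ∧ ∑ v ∈ s, c v = N}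

lemma mem_connSums {V : Type*} [Fintype V] (G : SimpleGraph V) (c : V → ℕ) (N : ℕ) :
    N ∈ connSums G c ↔
      ∃ s : Finset V, s.Nonempty ∧ (G.induce (↑s : Set V)).Connected ∧ ∑ v ∈ s, c v = N :=
  Iff.rfl

lemma single_mem_connSums {V : Type*} [Fintype V] [DecidableEq V] (G : SimpleGraph V)
    (c : V → ℕ) (v : V) : c v ∈ connSums G c :=
  ⟨{v}, ⟨v, Finset.mem_singleton_self v⟩, induce_singleton_connected G v, by simp⟩

lemma pair_mem_connSums {V : Type*} [Fintype V] [DecidableEq V] (G : SimpleGraph V)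
    (c : V → ℕ) {u v : V} (h : G.Adj u v) : c u + c v ∈ connSums G c :=
  ⟨{u, v}, ⟨u, by simp⟩, induce_pair_connected G h, Finset.sum_pair h.ne⟩

lemma sum_ge_card_mul {V : Type*} (s : Finset V) (f : V → ℕ) (lo : ℕ)
    (hlo : ∀ v, lo ≤ f v) : s.card * lo ≤ ∑ v ∈ s, f v := by
  have := Finset.card_nsmul_le_sum s f lo (fun v _ => hlo v)
  simpa [smul_eq_mul] using this

/-- For every graph `G` on `n` vertices there is an assignment
`c : V(G) → {1, …, 12n²}` whose collection of connected subgraph sums determines `G`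
among all `n`-vertex graphs. -/
theorem stmt_1 {V : Type} [Fintype V] (n : ℕ) (hn : Fintype.card V = n)
    (G : SimpleGraph V) :
    ∃ c : V → ℕ, (∀ v, 1 ≤ c v ∧ c v ≤ 12 * n ^ 2) ∧
      ∀ (V' : Type) (_ : Fintype V') (G' : SimpleGraph V') (c' : V' → ℕ),
        Fintype.card V' = n → (∀ v, 0 < c' v) →
        connSums G c = connSums G' c' → Nonempty (G ≃g G') := by
  classical
  rcases Nat.lt_or_ge n 2 with hn2 | hn2
  · -- n ≤ 1 : trivial case
    refine ⟨fun _ => 1, fun v => ⟨le_refl 1, ?_⟩, ?_⟩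
    · have : 0 < n := hn ▸ Fintype.card_pos_iff.mpr ⟨v⟩
      nlinarith
    · intro V' iV' G' c' hcard' _ _
      have hsubV : Subsingleton V := by
        rw [← Fintype.card_le_one_iff_subsingleton, hn]; omega
      have hsubV' : Subsingleton V' := by
        rw [← Fintype.card_le_one_iff_subsingleton, hcard']; omega
      let φ : V ≃ V' := (Fintype.equivFinOfCardEq hn).trans
        (Fintype.equivFinOfCardEq hcard').symm
      refine ⟨⟨φ, ?_⟩⟩
      intro a b
      constructor
      · intro hadj
        exact absurd (Subsingleton.elim _ _) hadj.ne
      · intro hadj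
        exact absurd (Subsingleton.elim _ _) hadj.ne
  · -- main case n ≥ 2
    obtain ⟨p, hp, hnp, hp2n⟩ := Nat.exists_prime_lt_and_le_two_mul n (by omega)
    have hp2 : 2 < p := by omega
    let e := Fintype.equivFinOfCardEq hn
    set B : ℕ := 8 * n ^ 2 with hB
    let a : ℕ → ℕ := fun x => 2*p*x + x^2 % p
    let c : V → ℕ := fun v => B + a (e v)
    obtain ⟨m, hm⟩ : ∃ m, n = m + 1 := ⟨n - 1, by omega⟩
    -- key bound : c v + 2n + 1 ≤ 12 n²
    have hbound : ∀ v, c v + 2*n + 1 ≤ 12 * n ^ 2 := by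
      intro v
      have hx : (e v : ℕ) < n := (e v).isLt
      have hr : (e v : ℕ)^2 % p < p := Nat.mod_lt _ hp.pos
      have h1 : 2*p*(e v : ℕ) ≤ (4*n)*m :=
        Nat.mul_le_mul (by omega) (by omega)
      have hBb : (B : ℕ) = 8 * n^2 := hB
      show B + (2*p*(e v : ℕ) + (e v : ℕ)^2 % p) + 2*n + 1 ≤ 12 * n ^ 2
      rw [hBb]
      nlinarith [h1, hr, hp2n, hm]
    have hclo : ∀ v, B ≤ c v := fun v => Nat.le_add_right _ _
    have hchi : ∀ v, c v ≤ 12 * n ^ 2 - (2*n+1) := by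
      intro v; have := hbound v; omega
    have hcinj : Function.Injective c := by
      intro u v huv
      have h4 : a (e u) + a (e v) = a (e v) + a (e v) := by
        have : a (e u) = a (e v) := by
          have : B + a (e u) = B + a (e v) := huv
          omega
        omega
      have := sidon hp hp2 (show (e u : ℕ) < p by omega) (show (e v : ℕ) < p by omega)
        (show (e v : ℕ) < p by omega) (show (e v : ℕ) < p by omega) h4
      have : (e u : ℕ) = (e v : ℕ) := by tauto
      exact e.injective (Fin.ext this)
    have honec : ∀ v, 1 ≤ c v := by
      intro v
      have h1 := hclo v
      have h8 : 1 ≤ B := by rw [hB]; nlinarith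
      omega
    refine ⟨c, fun v => ⟨honec v, by have := hbound v; omega⟩, ?_⟩
    intro V' iV' G' c' hcard' hpos' hS
    -- every value of c' is at least B
    have hc'B : ∀ w : V', B ≤ c' w := by
      intro w
      have hmem : c' w ∈ connSums G c := by
        rw [hS]; exact single_mem_connSums G' c' w
      obtain ⟨s, hne, _, hsum⟩ := hmem
      have h1 := sum_ge_card_mul s c B hclo
      have hcard1 : 1 ≤ s.card := Finset.one_le_card.mpr hne
      calc B = 1 * B := (one_mul B).symm
        _ ≤ s.card * B := Nat.mul_le_mul_right _ hcard1
        _ ≤ ∑ v ∈ s, c v := h1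
        _ = c' w := hsum
    -- each label c v is attained by a unique vertex of G'
    have hlift : ∀ v : V, ∃ w : V', c' w = c v := by
      intro v
      have hmem : c v ∈ connSums G' c' := by
        rw [← hS]; exact single_mem_connSums G c v
      obtain ⟨s, hne, _, hsum⟩ := hmem
      have h1 := sum_ge_card_mul s c' B hc'B
      have hcard1 : s.card = 1 := by
        by_contra hne1
        have h2 : 2 ≤ s.card := by
          have := Finset.one_le_card.mpr hne; omega
        have : 2 * B ≤ ∑ w ∈ s, c' w :=
          le_trans (Nat.mul_le_mul_right _ h2) h1
        have hcv := hbound v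
        rw [hsum] at this
        have : 16 * n ^ 2 ≤ c v := by rw [hB] at this; omega
        nlinarith [hbound v, hn2]
      obtain ⟨w, hw⟩ := Finset.card_eq_one.mp hcard1
      exact ⟨w, by rw [← hsum, hw, Finset.sum_singleton]⟩
    choose φ hφ using hlift
    have hφbij : Function.Bijective φ := by
      refine (Fintype.bijective_iff_injective_and_card φ).mpr ⟨?_, by rw [hn, hcard']⟩
      intro u v huv
      apply hcinj
      rw [← hφ u, ← hφ v, huv]
    let ψ : V ≃ V' := Equiv.ofBijective φ hφbij
    have hψ : ∀ w : V', c' w = c (ψ.symm w) := by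
      intro w
      have := hφ (ψ.symm w)
      have hw : φ (ψ.symm w) = w := ψ.apply_symm_apply w
      rw [hw] at this
      exact this
    -- sidon for labels: c u + c v = c z + c w → pairs match
    have hcsidon : ∀ u v z w : V, c u + c v = c z + c w →
        (u = z ∧ v = w) ∨ (u = w ∧ v = z) := by
      intro u v z w hsum
      have h4 : a (e u) + a (e v) = a (e z) + a (e w) := by
        have : (B + a (e u)) + (B + a (e v)) = (B + a (e z)) + (B + a (e w)) := hsum
        omega
      have := sidon hp hp2 (show (e u : ℕ) < p by omega) (show (e v : ℕ) < p by omega)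
        (show (e z : ℕ) < p by omega) (show (e w : ℕ) < p by omega) h4
      rcases this with ⟨h5, h6⟩ | ⟨h5, h6⟩
      · exact Or.inl ⟨e.injective (Fin.ext h5), e.injective (Fin.ext h6)⟩
      · exact Or.inr ⟨e.injective (Fin.ext h5), e.injective (Fin.ext h6)⟩
    -- pair sums land on 2-element connected sets
    have hpair : ∀ (N : ℕ), N ∈ connSums G' c' → 16 * n^2 ≤ N → N + 1 ≤ 24 * n^2 →
        ∃ w1 w2 : V', w1 ≠ w2 ∧ G'.Adj w1 w2 ∧ c' w1 + c' w2 = N := by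
      intro N hmem hlo hhi
      obtain ⟨s, hne, hconn, hsum⟩ := hmem
      have h1 := sum_ge_card_mul s c' B hc'B
      have hcard2 : s.card = 2 := by
        rcases Nat.lt_or_ge s.card 2 with h | h
        · -- card = 1 : sum ≤ 12n² - (2n+1) < 16n²
          have hcard1 : s.card = 1 := by
            have := Finset.one_le_card.mpr hne; omega
          obtain ⟨w, hw⟩ := Finset.card_eq_one.mp hcard1
          rw [hw, Finset.sum_singleton] at hsum
          have := hψ w
          have h2 := hbound (ψ.symm w)
          exfalso
          have : c' w ≤ 12 * n ^ 2 := by rw [this]; omega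
          omega
        · rcases Nat.lt_or_ge s.card 3 with h3 | h3
          · omega
          · exfalso
            have : 3 * B ≤ ∑ w ∈ s, c' w :=
              le_trans (Nat.mul_le_mul_right _ h3) h1
            rw [hsum, hB] at this
            omega
      obtain ⟨w1, w2, hww, hws⟩ := Finset.card_eq_two.mp hcard2
      subst hws
      have hadj : G'.Adj w1 w2 := adj_of_induce_pair_connected G' hww hconn
      refine ⟨w1, w2, hww, hadj, ?_⟩
      rw [← hsum, Finset.sum_pair hww]
    -- same for G
    have hpairG : ∀ (N : ℕ), N ∈ connSums G c → 16 * n^2 ≤ N → N + 1 ≤ 24 * n^2 →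
        ∃ u1 u2 : V, u1 ≠ u2 ∧ G.Adj u1 u2 ∧ c u1 + c u2 = N := by
      intro N hmem hlo hhi
      obtain ⟨s, hne, hconn, hsum⟩ := hmem
      have h1 := sum_ge_card_mul s c B hclo
      have hcard2 : s.card = 2 := by
        rcases Nat.lt_or_ge s.card 2 with h | h
        · have hcard1 : s.card = 1 := by
            have := Finset.one_le_card.mpr hne; omega
          obtain ⟨w, hw⟩ := Finset.card_eq_one.mp hcard1
          rw [hw, Finset.sum_singleton] at hsum
          have h2 := hbound w
          omega
        · rcases Nat.lt_or_ge s.card 3 with h3 | h3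
          · omega
          · exfalso
            have : 3 * B ≤ ∑ w ∈ s, c w :=
              le_trans (Nat.mul_le_mul_right _ h3) h1
            rw [hsum, hB] at this
            omega
      obtain ⟨u1, u2, hww, hws⟩ := Finset.card_eq_two.mp hcard2
      subst hws
      have hadj : G.Adj u1 u2 := adj_of_induce_pair_connected G hww hconn
      refine ⟨u1, u2, hww, hadj, ?_⟩
      rw [← hsum, Finset.sum_pair hww]
    -- the isomorphism
    refine ⟨⟨ψ, ?_⟩⟩
    intro u v
    have hpairbound : ∀ x y : V, c x + c y + 2 ≤ 24 * n ^ 2 := by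
      intro x y
      have := hbound x; have := hbound y
      omega
    constructor
    · -- G'.Adj (ψ u) (ψ v) → G.Adj u v
      intro hadj
      have hmem : c' (ψ u) + c' (ψ v) ∈ connSums G c := by
        rw [hS]; exact pair_mem_connSums G' c' hadj
      have hcc : c' (ψ u) = c u := by
        rw [hψ (ψ u), ψ.symm_apply_apply]
      have hcc' : c' (ψ v) = c v := by
        rw [hψ (ψ v), ψ.symm_apply_apply]
      rw [hcc, hcc'] at hmem
      obtain ⟨u1, u2, hne12, hadjG, hsum12⟩ := hpairG (c u + c v) hmem
        (by have := hclo u; have := hclo v; rw [hB] at *; omega)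
        (by have := hpairbound u v; omega)
      rcases hcsidon u1 u2 u v hsum12 with ⟨rfl, rfl⟩ | ⟨rfl, rfl⟩
      · exact hadjG
      · exact hadjG.symm
    · -- G.Adj u v → G'.Adj (ψ u) (ψ v)
      intro hadj
      have hmem : c u + c v ∈ connSums G' c' := by
        rw [← hS]; exact pair_mem_connSums G c hadj
      obtain ⟨w1, w2, hne12, hadj', hsum12⟩ := hpair (c u + c v) hmem
        (by have := hclo u; have := hclo v; rw [hB] at *; omega)
        (by have := hpairbound u v; omega)
      have hw1 : c' w1 = c (ψ.symm w1) := hψ w1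
      have hw2 : c' w2 = c (ψ.symm w2) := hψ w2
      rw [hw1, hw2] at hsum12
      rcases hcsidon (ψ.symm w1) (ψ.symm w2) u v hsum12 with ⟨h1, h2⟩ | ⟨h1, h2⟩
      · have e1 : w1 = ψ u := by rw [← h1, ψ.apply_symm_apply]
        have e2 : w2 = ψ v := by rw [← h2, ψ.apply_symm_apply]
        rw [← e1, ← e2]; exact hadj'
      · have e1 : w1 = ψ v := by rw [← h1, ψ.apply_symm_apply]
        have e2 : w2 = ψ u := by rw [← h2, ψ.apply_symm_apply]
        rw [← e1, ← e2]; exact hadj'.symm
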